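/- Let H be a finite simple graph and v a non-isolated vertex of H. Then I(Tr(H,v), −1/2) = −(1/4)·I(H_v, −1/2). -/

import Mathlib

open scoped Classical

/-- A finset of vertices is independent if no two of its members are adjacent. -/
def IsIndep {W : Type*} (G : SimpleGraph W) (s : Finset W) : Prop :=
  ∀ x ∈ s, ∀ y ∈ s, ¬ G.Adj x y

/-- A maximal independent set: independent and not properly contained in another
independent set. -/
def IsMaxIndep {W : Type*} (G : SimpleGraph W) (s : Finset W) : Prop :=
  IsIndep G s ∧ ∀ t : Finset W, IsIndep G t → s ⊆ t → t = s

/-- The independence number `α(G)`: the maximum size of an independent set. -/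
noncomputable def indepNum {W : Type*} (G : SimpleGraph W) [Fintype W] : ℕ :=
  sSup {n | ∃ s : Finset W, IsIndep G s ∧ s.card = n}

/-- Trung's construction `Tr(H, v)`: three new vertices `a = Sum.inr 0`, `b = Sum.inr 1`,
`c = Sum.inr 2` are added to `H`; `c` is joined to `b` and to every neighbor of `v`,
`b` is joined to `a`, and `a` is joined to `v`. -/
def Tr {V : Type*} (H : SimpleGraph V) (v : V) : SimpleGraph (V ⊕ Fin 3) :=
  SimpleGraph.fromRel (fun x y =>
    match x, y with
    | Sum.inl x, Sum.inl y => H.Adj x y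
    | Sum.inl x, Sum.inr i => (i = 0 ∧ x = v) ∨ (i = 2 ∧ H.Adj x v)
    | Sum.inr i, Sum.inr j => (i = 0 ∧ j = 1) ∨ (i = 1 ∧ j = 2)
    | _, _ => False)

/-- The set of vertices remaining after deleting the closed neighborhood `N[F]`
of a set `F` of vertices. -/
def offNbhd {V : Type*} (G : SimpleGraph V) (F : Set V) : Set V :=
  {w | w ∉ F ∧ ∀ u ∈ F, ¬ G.Adj u w}

/-- `G_F`: the induced subgraph of `G` on `V(G) \ N[F]`. -/
def delNbhd {V : Type*} (G : SimpleGraph V) (F : Set V) : SimpleGraph (offNbhd G F) :=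
  G.induce (offNbhd G F)

/-- `H_v = H \ N[v]`. -/
def delVert {V : Type*} (H : SimpleGraph V) (v : V) : SimpleGraph (offNbhd H {v}) :=
  delNbhd H {v}

/-- The independence polynomial `I(G, x) = Σ_i a_i x^i` of a finite graph,
as a polynomial over `ℚ`. -/
noncomputable def indepPoly {W : Type*} (G : SimpleGraph W) [Fintype W] : Polynomial ℚ :=
  ∑ s ∈ Finset.univ.filter (fun s : Finset W => IsIndep G s),
    (Polynomial.X : Polynomial ℚ) ^ s.card

/-- `a_i(G)`: the number of independent sets of size `i`, indexed by `ℤ`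
(so that it is `0` for `i < 0`). -/
noncomputable def numIndep {W : Type*} (G : SimpleGraph W) [Fintype W] (i : ℤ) : ℕ :=
  (Finset.univ.filter (fun s : Finset W => IsIndep G s ∧ (s.card : ℤ) = i)).card

/-- A finite graph is well-covered if every maximal independent set has size `α(G)`. -/
def WellCovered {W : Type*} (G : SimpleGraph W) [Fintype W] : Prop :=
  ∀ s : Finset W, IsMaxIndep G s → s.card = indepNum G

/-- A finite graph is a `W₂` graph if it has at least two vertices and every pair of
disjoint independent sets is contained in a pair of disjoint maximum independent sets. -/
def IsW2 {W : Type*} (G : SimpleGraph W) [Fintype W] : Prop :=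
  2 ≤ Fintype.card W ∧
    ∀ A B : Finset W, IsIndep G A → IsIndep G B → Disjoint A B →
      ∃ A' B' : Finset W, IsIndep G A' ∧ IsIndep G B' ∧ Disjoint A' B' ∧
        A ⊆ A' ∧ B ⊆ B' ∧ A'.card = indepNum G ∧ B'.card = indepNum G


section TrAux

open Sum Finset

variable {V : Type*} (H : SimpleGraph V) (v : V)

lemma tr_adj_inl_inl (x y : V) : (Tr H v).Adj (.inl x) (.inl y) ↔ H.Adj x y := by
  constructor
  · rintro ⟨-, h | h⟩
    · exact h
    · exact h.symm
  · intro h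
    exact ⟨fun he => h.ne (Sum.inl.inj he), Or.inl h⟩

lemma tr_adj_inl_inr (x : V) (i : Fin 3) :
    (Tr H v).Adj (.inl x) (.inr i) ↔ (i = 0 ∧ x = v) ∨ (i = 2 ∧ H.Adj x v) := by
  constructor
  · rintro ⟨-, h | h⟩
    · exact h
    · exact h.elim
  · intro h
    exact ⟨fun he => by simp at he, Or.inl h⟩

lemma tr_adj_inr_inr (i j : Fin 3) :
    (Tr H v).Adj (.inr i) (.inr j) ↔
      (i = 0 ∧ j = 1) ∨ (i = 1 ∧ j = 2) ∨ (j = 0 ∧ i = 1) ∨ (j = 1 ∧ i = 2) := by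
  constructor
  · rintro ⟨-, h | h⟩
    · exact h.imp id Or.inl
    · rcases h with h | h
      · exact Or.inr (Or.inr (Or.inl h))
      · exact Or.inr (Or.inr (Or.inr h))
  · intro h
    refine ⟨?_, ?_⟩
    · rintro he
      rcases Sum.inr.inj he with rfl
      rcases h with ⟨rfl, h⟩ | ⟨rfl, h⟩ | ⟨rfl, h⟩ | ⟨rfl, h⟩ <;> exact absurd h (by decide)
    · rcases h with h | h | h | h
      · exact Or.inl (Or.inl h)
      · exact Or.inl (Or.inr h)
      · exact Or.inr (Or.inl ⟨h.1, h.2⟩)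
      · exact Or.inr (Or.inr ⟨h.1, h.2⟩)

lemma isIndep_disjSum_iff (A : Finset V) (B : Finset (Fin 3)) :
    IsIndep (Tr H v) (A.disjSum B) ↔
      IsIndep H A ∧ (∀ i ∈ B, ∀ j ∈ B, ¬ (Tr H v).Adj (.inr i) (.inr j)) ∧
        (∀ x ∈ A, ∀ i ∈ B, ¬ (Tr H v).Adj (.inl x) (.inr i)) := by
  constructor
  · intro h
    refine ⟨fun x hx y hy hxy => ?_, fun i hi j hj => ?_, fun x hx i hi => ?_⟩
    · exact h (.inl x) (by simp [hx]) (.inl y) (by simp [hy]) ((tr_adj_inl_inl H v x y).mpr hxy)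
    · exact h (.inr i) (by simp [hi]) (.inr j) (by simp [hj])
    · exact h (.inl x) (by simp [hx]) (.inr i) (by simp [hi])
  · rintro ⟨h1, h2, h3⟩ p hp q hq hadj
    rcases p with x | i <;> rcases q with y | j
    · exact h1 x (by simpa using hp) y (by simpa using hq) ((tr_adj_inl_inl H v x y).mp hadj)
    · exact h3 x (by simpa using hp) j (by simpa using hq) hadj
    · exact h3 y (by simpa using hq) i (by simpa using hp) hadj.symm
    · exact h2 i (by simpa using hp) j (by simpa using hq) hadj

lemma mem_offNbhd_singleton (w : V) :
    w ∈ offNbhd H {v} ↔ w ≠ v ∧ ¬ H.Adj v w := by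
  simp [offNbhd]

lemma delVert_adj (a b : offNbhd H {v}) :
    (delVert H v).Adj a b ↔ H.Adj (a : V) (b : V) := by
  simp [delVert, delNbhd]

/-- Auxiliary weighted count of finsets satisfying a predicate. -/
noncomputable def sumIndep {V : Type*} [Fintype V] (x : ℚ) (P : Finset V → Prop) : ℚ :=
  ∑ A : Finset V, if P A then x ^ A.card else 0

lemma sumIndep_filter {V : Type*} [Fintype V] (x : ℚ) (P : Finset V → Prop) :
    sumIndep x P = ∑ A ∈ Finset.univ.filter P, x ^ A.card := by
  rw [sumIndep, Finset.sum_filter]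

end TrAux

theorem indepPoly_Tr_eval_neg_half {V : Type*} [Fintype V] (H : SimpleGraph V) (v : V)
    (hv : ∃ u, H.Adj v u) :
    (indepPoly (Tr H v)).eval (-(1 / 2) : ℚ) =
      -(1 / 4) * (indepPoly (delVert H v)).eval (-(1 / 2) : ℚ) := by
  classical
  set x : ℚ := -(1 / 2) with hx
  -- Step 1: rewrite both evaluations as sums over all finsets with indicators
  have hLHS : (indepPoly (Tr H v)).eval x
      = ∑ s : Finset (V ⊕ Fin 3), if IsIndep (Tr H v) s then x ^ s.card else 0 := by
    simp [indepPoly, Polynomial.eval_finset_sum, Finset.sum_filter,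
      apply_ite (Polynomial.eval x)]
  have hRHS : (indepPoly (delVert H v)).eval x
      = sumIndep x (fun t : Finset (offNbhd H {v}) => IsIndep (delVert H v) t) := by
    rw [sumIndep_filter]
    simp [indepPoly, Polynomial.eval_finset_sum, apply_ite (Polynomial.eval x)]
  -- Step 2: decompose over the `Fin 3` part
  let e : Finset (Fin 3) × Finset V ≃ Finset (V ⊕ Fin 3) :=
    { toFun := fun p => p.2.disjSum p.1
      invFun := fun s => (s.toRight, s.toLeft)
      left_inv := fun p => by simp
      right_inv := fun s => by simp [Finset.toLeft_disjSum_toRight] }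
  have hsplit : (∑ s : Finset (V ⊕ Fin 3), if IsIndep (Tr H v) s then x ^ s.card else 0)
      = ∑ B : Finset (Fin 3), ∑ A : Finset V,
          if IsIndep (Tr H v) (A.disjSum B) then x ^ (A.card + B.card) else 0 := by
    rw [← Equiv.sum_comp e (fun s => if IsIndep (Tr H v) s then x ^ s.card else 0),
      Fintype.sum_prod_type]
    refine Finset.sum_congr rfl fun B _ => Finset.sum_congr rfl fun A _ => ?_
    simp [e, Finset.card_disjSum]
  have huniv : (Finset.univ : Finset (Finset (Fin 3))) =
      {∅, {0}, {1}, {2}, {0, 1}, {0, 2}, {1, 2}, {0, 1, 2}} := by decide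
  -- the impossible `Fin 3` parts
  have hbad : ∀ B : Finset (Fin 3), (0 : Fin 3) ∈ B → (1 : Fin 3) ∈ B →
      ∀ A : Finset V, ¬ IsIndep (Tr H v) (A.disjSum B) := by
    intro B h0 h1 A h
    rw [isIndep_disjSum_iff] at h
    exact h.2.1 0 h0 1 h1 ((tr_adj_inr_inr H v 0 1).mpr (Or.inl ⟨rfl, rfl⟩))
  have hbad' : ∀ A : Finset V, ¬ IsIndep (Tr H v) (A.disjSum ({1, 2} : Finset (Fin 3))) := by
    intro A h
    rw [isIndep_disjSum_iff] at h
    exact h.2.1 1 (by simp) 2 (by simp)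
      ((tr_adj_inr_inr H v 1 2).mpr (Or.inr (Or.inl ⟨rfl, rfl⟩)))
  -- the possible `Fin 3` parts
  have e0 : ∀ A : Finset V,
      IsIndep (Tr H v) (A.disjSum (∅ : Finset (Fin 3))) ↔ IsIndep H A := by
    intro A
    rw [isIndep_disjSum_iff]
    simp
  have e1 : ∀ A : Finset V,
      IsIndep (Tr H v) (A.disjSum ({0} : Finset (Fin 3))) ↔ IsIndep H A ∧ v ∉ A := by
    intro A
    rw [isIndep_disjSum_iff]
    constructor
    · rintro ⟨h1, -, h3⟩
      exact ⟨h1, fun hvA =>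
        h3 v hvA 0 (by simp) ((tr_adj_inl_inr H v v 0).mpr (Or.inl ⟨rfl, rfl⟩))⟩
    · rintro ⟨h1, h2⟩
      refine ⟨h1, ?_, ?_⟩
      · intro i hi j hj hadj
        rw [Finset.mem_singleton] at hi hj
        subst hi; subst hj
        rw [tr_adj_inr_inr] at hadj
        exact absurd hadj (by decide)
      · intro y hy i hi hadj
        rw [Finset.mem_singleton] at hi
        subst hi
        rw [tr_adj_inl_inr] at hadj
        rcases hadj with ⟨-, rfl⟩ | ⟨hc, -⟩
        · exact h2 hy
        · exact absurd hc (by decide)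
  have e2 : ∀ A : Finset V,
      IsIndep (Tr H v) (A.disjSum ({1} : Finset (Fin 3))) ↔ IsIndep H A := by
    intro A
    rw [isIndep_disjSum_iff]
    constructor
    · rintro ⟨h1, -, -⟩
      exact h1
    · intro h1
      refine ⟨h1, ?_, ?_⟩
      · intro i hi j hj hadj
        rw [Finset.mem_singleton] at hi hj
        subst hi; subst hj
        rw [tr_adj_inr_inr] at hadj
        exact absurd hadj (by decide)
      · intro y hy i hi hadj
        rw [Finset.mem_singleton] at hi
        subst hi
        rw [tr_adj_inl_inr] at hadj
        rcases hadj with ⟨hc, -⟩ | ⟨hc, -⟩ <;> exact absurd hc (by decide)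
  have e3 : ∀ A : Finset V,
      IsIndep (Tr H v) (A.disjSum ({2} : Finset (Fin 3))) ↔
        IsIndep H A ∧ ∀ u ∈ A, ¬ H.Adj u v := by
    intro A
    rw [isIndep_disjSum_iff]
    constructor
    · rintro ⟨h1, -, h3⟩
      exact ⟨h1, fun u hu hadj =>
        h3 u hu 2 (by simp) ((tr_adj_inl_inr H v u 2).mpr (Or.inr ⟨rfl, hadj⟩))⟩
    · rintro ⟨h1, h2⟩
      refine ⟨h1, ?_, ?_⟩
      · intro i hi j hj hadj
        rw [Finset.mem_singleton] at hi hj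
        subst hi; subst hj
        rw [tr_adj_inr_inr] at hadj
        exact absurd hadj (by decide)
      · intro y hy i hi hadj
        rw [Finset.mem_singleton] at hi
        subst hi
        rw [tr_adj_inl_inr] at hadj
        rcases hadj with ⟨hc, -⟩ | ⟨-, hc⟩
        · exact absurd hc (by decide)
        · exact h2 y hy hc
  have e4 : ∀ A : Finset V,
      IsIndep (Tr H v) (A.disjSum ({0, 2} : Finset (Fin 3))) ↔
        IsIndep H A ∧ v ∉ A ∧ ∀ u ∈ A, ¬ H.Adj u v := by
    intro A
    rw [isIndep_disjSum_iff]
    constructor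
    · rintro ⟨h1, -, h3⟩
      refine ⟨h1, fun hvA =>
        h3 v hvA 0 (by simp) ((tr_adj_inl_inr H v v 0).mpr (Or.inl ⟨rfl, rfl⟩)),
        fun u hu hadj =>
          h3 u hu 2 (by simp) ((tr_adj_inl_inr H v u 2).mpr (Or.inr ⟨rfl, hadj⟩))⟩
    · rintro ⟨h1, h2, h3⟩
      refine ⟨h1, ?_, ?_⟩
      · intro i hi j hj hadj
        rw [tr_adj_inr_inr] at hadj
        rcases Finset.mem_insert.mp hi with rfl | hi' <;>
          rcases Finset.mem_insert.mp hj with rfl | hj'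
        · exact absurd hadj (by decide)
        · rw [Finset.mem_singleton] at hj'; subst hj'; exact absurd hadj (by decide)
        · rw [Finset.mem_singleton] at hi'; subst hi'; exact absurd hadj (by decide)
        · rw [Finset.mem_singleton] at hi' hj'; subst hi'; subst hj'
          exact absurd hadj (by decide)
      · intro y hy i hi hadj
        rw [tr_adj_inl_inr] at hadj
        rcases Finset.mem_insert.mp hi with rfl | hi'
        · rcases hadj with ⟨-, rfl⟩ | ⟨hc, -⟩
          · exact h2 hy
          · exact absurd hc (by decide)
        · rw [Finset.mem_singleton] at hi'; subst hi'
          rcases hadj with ⟨hc, -⟩ | ⟨-, hc⟩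
          · exact absurd hc (by decide)
          · exact h3 y hy hc
  -- pull out the `Fin 3` contribution of each inner sum
  have key : ∀ (B : Finset (Fin 3)) (P : Finset V → Prop),
      (∀ A, IsIndep (Tr H v) (A.disjSum B) ↔ P A) →
      (∑ A : Finset V, if IsIndep (Tr H v) (A.disjSum B) then x ^ (A.card + B.card) else 0)
        = x ^ B.card * sumIndep x P := by
    intro B P hP
    rw [sumIndep, Finset.mul_sum]
    refine Finset.sum_congr rfl fun A _ => ?_
    rw [pow_add]
    by_cases h : P A
    · rw [if_pos ((hP A).mpr h), if_pos h, mul_comm]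
    · rw [if_neg (fun hh => h ((hP A).mp hh)), if_neg h, mul_zero]
  have keybad : ∀ B : Finset (Fin 3), (∀ A : Finset V, ¬ IsIndep (Tr H v) (A.disjSum B)) →
      (∑ A : Finset V, if IsIndep (Tr H v) (A.disjSum B) then x ^ (A.card + B.card) else 0)
        = 0 :=
    fun B hB => Finset.sum_eq_zero fun A _ => if_neg (hB A)
  -- the four basic sums
  have hT : sumIndep x (fun A : Finset V => IsIndep H A ∧ v ∈ A)
      = x * sumIndep x
          (fun A : Finset V => IsIndep H A ∧ v ∉ A ∧ ∀ u ∈ A, ¬ H.Adj u v) := by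
    rw [sumIndep_filter, sumIndep_filter, Finset.mul_sum]
    refine Finset.sum_bij' (fun A _ => A.erase v) (fun A _ => insert v A) ?_ ?_ ?_ ?_ ?_
    · intro A hA
      simp only [Finset.mem_filter] at hA ⊢
      obtain ⟨-, hInd, hvA⟩ := hA
      exact ⟨Finset.mem_univ _,
        fun a ha b hb => hInd a (Finset.mem_of_mem_erase ha) b (Finset.mem_of_mem_erase hb),
        Finset.notMem_erase _ _,
        fun u hu => hInd u (Finset.mem_of_mem_erase hu) v hvA⟩
    · intro A hA
      simp only [Finset.mem_filter] at hA ⊢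
      obtain ⟨-, hInd, hvA, hnb⟩ := hA
      refine ⟨Finset.mem_univ _, ?_, Finset.mem_insert_self _ _⟩
      intro a ha b hb
      rcases Finset.mem_insert.mp ha with rfl | ha' <;>
        rcases Finset.mem_insert.mp hb with rfl | hb'
      · exact H.loopless.irrefl _
      · exact fun h => hnb b hb' h.symm
      · exact hnb a ha'
      · exact hInd a ha' b hb'
    · intro A hA
      simp only [Finset.mem_filter] at hA
      exact Finset.insert_erase hA.2.2
    · intro A hA
      simp only [Finset.mem_filter] at hA
      exact Finset.erase_insert hA.2.2.1
    · intro A hA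
      simp only [Finset.mem_filter] at hA
      have hvA := hA.2.2
      rw [← Finset.card_erase_add_one hvA, pow_succ, mul_comm]
  have hsplit0 : sumIndep x (fun A : Finset V => IsIndep H A)
      = sumIndep x (fun A : Finset V => IsIndep H A ∧ v ∉ A)
        + sumIndep x (fun A : Finset V => IsIndep H A ∧ v ∈ A) := by
    simp only [sumIndep]
    rw [← Finset.sum_add_distrib]
    refine Finset.sum_congr rfl fun A _ => ?_
    by_cases h1 : IsIndep H A <;> by_cases h2 : v ∈ A <;> simp [h1, h2]
  have hsplit2 : sumIndep x (fun A : Finset V => IsIndep H A ∧ ∀ u ∈ A, ¬ H.Adj u v)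
      = sumIndep x
          (fun A : Finset V => IsIndep H A ∧ v ∉ A ∧ ∀ u ∈ A, ¬ H.Adj u v)
        + sumIndep x (fun A : Finset V => IsIndep H A ∧ v ∈ A) := by
    simp only [sumIndep]
    rw [← Finset.sum_add_distrib]
    refine Finset.sum_congr rfl fun A _ => ?_
    by_cases h1 : IsIndep H A
    · by_cases h2 : v ∈ A
      · have h3 : ∀ u ∈ A, ¬ H.Adj u v := fun u hu => h1 u hu v h2
        rw [if_pos ⟨h1, h3⟩, if_neg (fun hc => hc.2.1 h2), if_pos ⟨h1, h2⟩, zero_add]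
      · by_cases h3 : ∀ u ∈ A, ¬ H.Adj u v <;> simp [h1, h2, h3]
    · simp [h1]
  -- identification with the deleted-neighborhood graph
  have hdel : sumIndep x (fun A : Finset V => IsIndep H A ∧ v ∉ A ∧ ∀ u ∈ A, ¬ H.Adj u v)
      = sumIndep x (fun t : Finset (offNbhd H {v}) => IsIndep (delVert H v) t) := by
    rw [sumIndep_filter, sumIndep_filter]
    refine Finset.sum_bij' (fun A _ => A.subtype (· ∈ offNbhd H {v}))
      (fun t _ => t.map (Function.Embedding.subtype _)) ?_ ?_ ?_ ?_ ?_
    · intro A hA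
      simp only [Finset.mem_filter] at hA ⊢
      obtain ⟨-, hInd, hvA, hnb⟩ := hA
      refine ⟨Finset.mem_univ _, ?_⟩
      rintro ⟨a, pa⟩ ha ⟨b, pb⟩ hb hadj
      rw [delVert_adj] at hadj
      exact hInd a (Finset.mem_subtype.mp ha) b (Finset.mem_subtype.mp hb) hadj
    · intro t ht
      simp only [Finset.mem_filter] at ht ⊢
      obtain ⟨-, hInd⟩ := ht
      refine ⟨Finset.mem_univ _, ?_, ?_, ?_⟩
      · intro a ha b hb hadj
        rcases Finset.mem_map.mp ha with ⟨a', ha', rfl⟩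
        rcases Finset.mem_map.mp hb with ⟨b', hb', rfl⟩
        exact hInd a' ha' b' hb' ((delVert_adj H v a' b').mpr hadj)
      · intro hmem
        rcases Finset.mem_map.mp hmem with ⟨a', -, ha'⟩
        exact ((mem_offNbhd_singleton H v _).mp a'.2).1 ha'
      · intro u hu hadj
        rcases Finset.mem_map.mp hu with ⟨a', -, rfl⟩
        exact ((mem_offNbhd_singleton H v _).mp a'.2).2 hadj.symm
    · intro A hA
      simp only [Finset.mem_filter] at hA
      obtain ⟨-, hInd, hvA, hnb⟩ := hA
      refine Finset.subtype_map_of_mem fun a ha => ?_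
      exact (mem_offNbhd_singleton H v a).mpr
        ⟨fun he => hvA (he ▸ ha), fun hadj => hnb a ha hadj.symm⟩
    · intro t ht
      ext a
      simp only [Finset.mem_subtype, Finset.mem_map, Function.Embedding.coe_subtype]
      constructor
      · rintro ⟨b, hb, h⟩
        exact (Subtype.ext h) ▸ hb
      · intro h
        exact ⟨a, h, rfl⟩
    · intro A hA
      simp only [Finset.mem_filter] at hA
      obtain ⟨-, hInd, hvA, hnb⟩ := hA
      have hmem : ∀ a ∈ A, a ∈ offNbhd H {v} := fun a ha =>
        (mem_offNbhd_singleton H v a).mpr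
          ⟨fun he => hvA (he ▸ ha), fun hadj => hnb a ha hadj.symm⟩
      conv_lhs => rw [← Finset.subtype_map_of_mem hmem, Finset.card_map]
  -- put everything together
  rw [hLHS, hRHS, hsplit, huniv]
  rw [Finset.sum_insert (by decide), Finset.sum_insert (by decide),
    Finset.sum_insert (by decide), Finset.sum_insert (by decide),
    Finset.sum_insert (by decide), Finset.sum_insert (by decide),
    Finset.sum_insert (by decide), Finset.sum_singleton]
  rw [key ∅ (fun A : Finset V => IsIndep H A) e0,
    key {0} (fun A : Finset V => IsIndep H A ∧ v ∉ A) e1,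
    key {1} (fun A : Finset V => IsIndep H A) e2,
    key {2} (fun A : Finset V => IsIndep H A ∧ ∀ u ∈ A, ¬ H.Adj u v) e3,
    key {0, 2} (fun A : Finset V => IsIndep H A ∧ v ∉ A ∧ ∀ u ∈ A, ¬ H.Adj u v) e4,
    keybad {0, 1} (hbad _ (by decide) (by decide)), keybad {1, 2} hbad',
    keybad {0, 1, 2} (hbad _ (by decide) (by decide))]
  rw [show (∅ : Finset (Fin 3)).card = 0 from rfl,
    show ({0} : Finset (Fin 3)).card = 1 by decide,
    show ({1} : Finset (Fin 3)).card = 1 by decide,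
    show ({2} : Finset (Fin 3)).card = 1 by decide,
    show ({0, 2} : Finset (Fin 3)).card = 2 by decide]
  rw [← hdel]
  have hx2 : x ^ 2 = 1 / 4 := by rw [hx]; norm_num
  rw [pow_zero, pow_one, hx2]
  rw [hx] at hT hsplit0 hsplit2 ⊢
  linear_combination (1 / 2 : ℚ) * hsplit0 - (1 / 2 : ℚ) * hsplit2
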